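/- Under the same exchangeable setting, Var(A'_i(λ)) = Var(A_i) + (1 − 1/G)(λ² V_φ − 2λ C), where A_i = Y_i − Ȳ, A'_i(λ) = A_i + λ(φ_i − φ̄), C = −(C_in − C_out), and V_φ = V_in − V_out. -/

import Mathlib

open MeasureTheory ProbabilityTheory Real Finset

noncomputable def cov {Ω : Type*} [MeasurableSpace Ω] (μ : Measure Ω) (X Y : Ω → ℝ) : ℝ :=
  (∫ ω, X ω * Y ω ∂μ) - (∫ ω, X ω ∂μ) * (∫ ω, Y ω ∂μ)

noncomputable def var {Ω : Type*} [MeasurableSpace Ω] (μ : Measure Ω) (X : Ω → ℝ) : ℝ :=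
  cov μ X X

section aux

variable {Ω : Type*} [MeasurableSpace Ω] {μ : Measure Ω}

lemma myIntMul {X Z : Ω → ℝ} (hX : MemLp X 2 μ) (hZ : MemLp Z 2 μ) :
    Integrable (fun ω => X ω * Z ω) μ := by
  have h1 := (hX.add hZ).integrable_sq
  have h2 := hX.integrable_sq
  have h3 := hZ.integrable_sq
  have h4 : Integrable (fun ω => (((X ω + Z ω) ^ 2 - X ω ^ 2) - Z ω ^ 2) / 2) μ :=
    ((h1.sub h2).sub h3).div_const 2
  refine h4.congr (Filter.Eventually.of_forall fun ω => ?_)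
  ring

lemma myMemSum {n : ℕ} {f : Fin n → Ω → ℝ} (hf : ∀ j, MemLp (f j) 2 μ)
    (s : Finset (Fin n)) : MemLp (fun ω => ∑ j ∈ s, f j ω) 2 μ := by
  have h := memLp_finset_sum' (μ := μ) (p := 2) s (fun j _ => hf j)
  have heq : (∑ j ∈ s, f j) = fun ω => ∑ j ∈ s, f j ω := by funext ω; simp
  rwa [heq] at h

lemma myMemCentered {n : ℕ} {f : Fin n → Ω → ℝ} (hf : ∀ j, MemLp (f j) 2 μ)
    (i : Fin n) (c : ℝ) : MemLp (fun ω => f i ω - c * ∑ j, f j ω) 2 μ := by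
  have h := (hf i).sub ((myMemSum hf Finset.univ).const_mul c)
  have heq : (fun ω => f i ω - c * ∑ j, f j ω)
      = (f i - fun ω => c * ∑ j, f j ω) := by funext ω; simp
  rwa [heq]

lemma cov_add_left [IsFiniteMeasure μ] {X Y Z : Ω → ℝ} (hX : MemLp X 2 μ)
    (hY : MemLp Y 2 μ) (hZ : MemLp Z 2 μ) :
    cov μ (fun ω => X ω + Y ω) Z = cov μ X Z + cov μ Y Z := by
  unfold cov
  have h1 : (∫ ω, (X ω + Y ω) * Z ω ∂μ) = (∫ ω, X ω * Z ω ∂μ) + ∫ ω, Y ω * Z ω ∂μ := by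
    rw [← integral_add (myIntMul hX hZ) (myIntMul hY hZ)]
    congr 1; funext ω; ring
  have h2 : (∫ ω, (X ω + Y ω) ∂μ) = (∫ ω, X ω ∂μ) + ∫ ω, Y ω ∂μ :=
    integral_add (hX.integrable one_le_two) (hY.integrable one_le_two)
  rw [h1, h2]; ring

lemma cov_smul_left {X Z : Ω → ℝ} (c : ℝ) :
    cov μ (fun ω => c * X ω) Z = c * cov μ X Z := by
  unfold cov
  simp_rw [mul_assoc, integral_const_mul]
  ring

lemma cov_comm (X Z : Ω → ℝ) : cov μ X Z = cov μ Z X := by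
  unfold cov
  simp_rw [mul_comm (X _) (Z _)]
  ring

lemma cov_sum_left [IsFiniteMeasure μ] {n : ℕ} {f : Fin n → Ω → ℝ} {Z : Ω → ℝ}
    (hf : ∀ j, MemLp (f j) 2 μ) (hZ : MemLp Z 2 μ) :
    cov μ (fun ω => ∑ j, f j ω) Z = ∑ j, cov μ (f j) Z := by
  classical
  have key : ∀ s : Finset (Fin n),
      cov μ (fun ω => ∑ j ∈ s, f j ω) Z = ∑ j ∈ s, cov μ (f j) Z := by
    intro s
    induction s using Finset.induction_on with
    | empty =>
      simp only [Finset.sum_empty]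
      unfold cov
      simp
    | insert a s hj ih =>
      simp only [Finset.sum_insert hj]
      rw [cov_add_left (hf a) (myMemSum hf s) hZ, ih]
  exact key Finset.univ

lemma cov_sub_left [IsFiniteMeasure μ] {X Y Z : Ω → ℝ} (hX : MemLp X 2 μ)
    (hY : MemLp Y 2 μ) (hZ : MemLp Z 2 μ) :
    cov μ (fun ω => X ω - Y ω) Z = cov μ X Z - cov μ Y Z := by
  have h := cov_add_left (μ := μ) hX (hY.const_mul (-1)) hZ
  have h2 := cov_smul_left (μ := μ) (X := Y) (Z := Z) (-1)
  simp only [neg_one_mul] at h h2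
  have heq : (fun ω => X ω - Y ω) = (fun ω => X ω + -Y ω) := by funext ω; ring
  rw [heq, h, h2]
  ring

/-- The key expansion for centered pairs. -/
lemma cov_centered {G : ℕ} (hG : 2 ≤ G) {μ : Measure Ω} [IsProbabilityMeasure μ]
    (X Z : Fin G → Ω → ℝ) (hX : ∀ j, MemLp (X j) 2 μ) (hZ : ∀ j, MemLp (Z j) 2 μ)
    (cin cout : ℝ) (hin : ∀ j, cov μ (X j) (Z j) = cin)
    (hout : ∀ j k, j ≠ k → cov μ (X j) (Z k) = cout) (i : Fin G) :
    cov μ (fun ω => X i ω - (1 / G : ℝ) * ∑ j, X j ω)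
      (fun ω => Z i ω - (1 / G : ℝ) * ∑ j, Z j ω) = (1 - 1 / G) * (cin - cout) := by
  classical
  have hGR : (G : ℝ) ≠ 0 := by positivity
  have hXsum : MemLp (fun ω => ∑ j, X j ω) 2 μ := myMemSum hX Finset.univ
  have hZsum : MemLp (fun ω => ∑ j, Z j ω) 2 μ := myMemSum hZ Finset.univ
  have hXc : MemLp (fun ω => (1 / G : ℝ) * ∑ j, X j ω) 2 μ := hXsum.const_mul _
  have hZc : MemLp (fun ω => (1 / G : ℝ) * ∑ j, Z j ω) 2 μ := hZsum.const_mul _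
  have hBcent : MemLp (fun ω => Z i ω - (1 / G : ℝ) * ∑ j, Z j ω) 2 μ :=
    myMemCentered hZ i _
  have h1 : (1 : ℕ) ≤ G := le_trans (by norm_num) hG
  have row : ∀ j : Fin G, ∑ k, cov μ (X j) (Z k) = cin + ((G : ℝ) - 1) * cout := by
    intro j
    rw [← Finset.add_sum_erase Finset.univ _ (Finset.mem_univ j), hin j]
    congr 1
    rw [Finset.sum_congr rfl (fun k hk => hout j k
        (by simpa [ne_comm, eq_comm] using (Finset.mem_erase.mp hk).1)),
      Finset.sum_const, Finset.card_erase_of_mem (Finset.mem_univ j)]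
    simp only [Finset.card_univ, Fintype.card_fin, nsmul_eq_mul]
    rw [Nat.cast_sub h1]
    simp
  have col : ∀ k : Fin G, ∑ j, cov μ (X j) (Z k) = cin + ((G : ℝ) - 1) * cout := by
    intro k
    rw [← Finset.add_sum_erase Finset.univ _ (Finset.mem_univ k), hin k]
    congr 1
    rw [Finset.sum_congr rfl (fun j hj => hout j k (Finset.mem_erase.mp hj).1),
      Finset.sum_const, Finset.card_erase_of_mem (Finset.mem_univ k)]
    simp only [Finset.card_univ, Fintype.card_fin, nsmul_eq_mul]
    rw [Nat.cast_sub h1]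
    simp
  have e1 : cov μ (fun ω => X i ω - (1 / G : ℝ) * ∑ j, X j ω)
      (fun ω => Z i ω - (1 / G : ℝ) * ∑ j, Z j ω)
      = cov μ (X i) (fun ω => Z i ω - (1 / G : ℝ) * ∑ j, Z j ω)
        - (1 / G : ℝ) * cov μ (fun ω => ∑ j, X j ω)
            (fun ω => Z i ω - (1 / G : ℝ) * ∑ j, Z j ω) := by
    rw [cov_sub_left (hX i) hXc hBcent, cov_smul_left]
  have e2 : ∀ W : Ω → ℝ, MemLp W 2 μ →
      cov μ W (fun ω => Z i ω - (1 / G : ℝ) * ∑ j, Z j ω)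
        = cov μ W (Z i) - (1 / G : ℝ) * ∑ k, cov μ W (Z k) := by
    intro W hW
    rw [cov_comm, cov_sub_left (hZ i) hZc hW, cov_smul_left, cov_sum_left hZ hW,
      cov_comm (Z i) W]
    congr 2
    exact Finset.sum_congr rfl fun k _ => cov_comm (Z k) W
  have e3 : cov μ (fun ω => ∑ j, X j ω) (Z i) = ∑ j, cov μ (X j) (Z i) :=
    cov_sum_left hX (hZ i)
  have e4 : ∀ k, cov μ (fun ω => ∑ j, X j ω) (Z k) = ∑ j, cov μ (X j) (Z k) :=
    fun k => cov_sum_left hX (hZ k)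
  rw [e1, e2 _ (hX i), e2 _ hXsum, e3, row i, col i]
  have e5 : ∑ k, cov μ (fun ω => ∑ j, X j ω) (Z k)
      = (G : ℝ) * (cin + ((G : ℝ) - 1) * cout) := by
    rw [Finset.sum_congr rfl fun k _ => (e4 k).trans (col k), Finset.sum_const]
    simp only [Finset.card_univ, Fintype.card_fin, nsmul_eq_mul]
  rw [e5, hin i]
  field_simp
  ring

end aux

theorem stmt4 {Ω : Type*} [MeasurableSpace Ω] (μ : Measure Ω) [IsProbabilityMeasure μ]
    (G : ℕ) (hG : 2 ≤ G) (Y φ : Fin G → Ω → ℝ)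
    (hY2 : ∀ i, MemLp (Y i) 2 μ) (hφ2 : ∀ i, MemLp (φ i) 2 μ)
    (Cin Cout Vin Vout : ℝ)
    (hCin : ∀ i, cov μ (Y i) (φ i) = Cin)
    (hCout : ∀ i j, i ≠ j → cov μ (Y i) (φ j) = Cout)
    (hVin : ∀ i, var μ (φ i) = Vin)
    (hVout : ∀ i j, i ≠ j → cov μ (φ i) (φ j) = Vout)
    (C Vφ : ℝ) (hC : C = -(Cin - Cout)) (hVφ : Vφ = Vin - Vout)
    (i : Fin G) (l : ℝ) :
    var μ (fun ω => (Y i ω - (1 / G : ℝ) * ∑ j, Y j ω)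
            + l * (φ i ω - (1 / G : ℝ) * ∑ j, φ j ω))
      = var μ (fun ω => Y i ω - (1 / G : ℝ) * ∑ j, Y j ω)
        + (1 - 1 / G) * (l ^ 2 * Vφ - 2 * l * C) := by
  classical
  set A : Ω → ℝ := fun ω => Y i ω - (1 / G : ℝ) * ∑ j, Y j ω with hA
  set B : Ω → ℝ := fun ω => φ i ω - (1 / G : ℝ) * ∑ j, φ j ω with hB
  have hAmem : MemLp A 2 μ := myMemCentered hY2 i _
  have hBmem : MemLp B 2 μ := myMemCentered hφ2 i _
  have hlB : MemLp (fun ω => l * B ω) 2 μ := hBmem.const_mul _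
  have hABmem : MemLp (fun ω => A ω + l * B ω) 2 μ := by
    have h := hAmem.add hlB
    have heq : (A + fun ω => l * B ω) = fun ω => A ω + l * B ω := by funext ω; simp
    rwa [heq] at h
  have expand : var μ (fun ω => A ω + l * B ω)
      = var μ A + 2 * l * cov μ A B + l ^ 2 * var μ B := by
    unfold var
    rw [cov_add_left hAmem hlB hABmem]
    rw [cov_comm A (fun ω => A ω + l * B ω), cov_add_left hAmem hlB hAmem]
    rw [cov_comm (fun ω => l * B ω) (fun ω => A ω + l * B ω),
      cov_add_left hAmem hlB (hBmem.const_mul l)]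
    rw [cov_smul_left, cov_smul_left, cov_comm A (fun x => l * B x), cov_smul_left,
      cov_comm B (fun x => l * B x), cov_smul_left, cov_comm B A]
    ring
  have hcovAB : cov μ A B = (1 - 1 / G) * (Cin - Cout) :=
    cov_centered hG Y φ hY2 hφ2 Cin Cout hCin hCout i
  have hvarB : var μ B = (1 - 1 / G) * (Vin - Vout) :=
    cov_centered hG φ φ hφ2 hφ2 Vin Vout hVin hVout i
  rw [expand, hcovAB, hvarB, hC, hVφ]
  ring
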